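/- Let z = (0, z_y, 0) with z_y > 0. Then {z}⊥ ∩ K_exp = {(x, 0, z) : x ≤ 0, z ≥ 0}, the unique two-dimensional face of the exponential cone. -/
import Mathlib


def Kexp : Set (EuclideanSpace ℝ (Fin 3)) :=
  {v | (0 < v 1 ∧ v 1 * Real.exp (v 0 / v 1) ≤ v 2) ∨ (v 0 ≤ 0 ∧ 0 ≤ v 2 ∧ v 1 = 0)}

theorem exposed_face_FnegInfty (z : EuclideanSpace ℝ (Fin 3))
    (h0 : z 0 = 0) (hy : 0 < z 1) (hz : z 2 = 0) :
    {q : EuclideanSpace ℝ (Fin 3) | q 0 * z 0 + q 1 * z 1 + q 2 * z 2 = 0} ∩ Kexp =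
      {v | v 0 ≤ 0 ∧ v 1 = 0 ∧ 0 ≤ v 2} := by
  ext v
  simp only [Set.mem_inter_iff, Set.mem_setOf_eq, Kexp, h0, hz, mul_zero, zero_add, add_zero]
  constructor
  · rintro ⟨hplane, hK⟩
    have hv1 : v 1 = 0 := by
      have := mul_eq_zero.mp hplane
      rcases this with h | h
      · exact h
      · exact absurd h hy.ne'
    rcases hK with ⟨hpos, _⟩ | ⟨h1, h2, h3⟩
    · exact absurd hv1 hpos.ne'
    · exact ⟨h1, hv1, h2⟩
  · rintro ⟨h1, h2, h3⟩
    exact ⟨by rw [h2, zero_mul], Or.inr ⟨h1, h3, h2⟩⟩
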